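/- Let d ≥ 2 be a squarefree integer with d ≡ 1 (mod 4), let K = ℚ(√d), ε > 1 the fundamental unit of the ring of integers O_K = ℤ[(1+√d)/2], and write ε = x + y·(1+√d)/2 with x, y ∈ ℕ. If d is prime and there exists a unit η of the order O_d = ℤ + d·O_K with 1 < η < ε^d, then d divides y. -/

import Mathlib

/-- The ring of integers `ℤ[(1+√d)/2]` of `ℚ(√d)` (for `d ≡ 1 mod 4`),
viewed as a subset of `ℝ`. -/
def ringOfInts (d : ℕ) : Set ℝ :=
  {α | ∃ x y : ℤ, α = x + y * ((1 + Real.sqrt d) / 2)}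

/-- The order `ℤ + d·O_K` of conductor `d`, viewed as a subset of `ℝ`. -/
def condOrder (d : ℕ) : Set ℝ :=
  {α | ∃ x y : ℤ, α = x + y * (d * ((1 + Real.sqrt d) / 2))}

/-- `α` is a unit of the subring (given as a subset of `ℝ`) `S`. -/
def IsUnitIn (S : Set ℝ) (α : ℝ) : Prop :=
  α ∈ S ∧ ∃ β ∈ S, α * β = 1

/-- `ε` is the fundamental unit (`> 1`) of `O_K`: it is the smallest unit
exceeding `1`. -/
def IsFundUnit (d : ℕ) (ε : ℝ) : Prop :=
  IsUnitIn (ringOfInts d) ε ∧ 1 < ε ∧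
    ∀ η : ℝ, IsUnitIn (ringOfInts d) η → 1 < η → ε ≤ η

namespace AuxDvdY

def pmul (m : ℤ) (p q : ℤ × ℤ) : ℤ × ℤ :=
  (p.1 * q.1 + m * p.2 * q.2, p.1 * q.2 + q.1 * p.2 + p.2 * q.2)

def ppow (m : ℤ) (p : ℤ × ℤ) : ℕ → ℤ × ℤ
  | 0 => (1, 0)
  | k + 1 => pmul m p (ppow m p k)

def Nm (m : ℤ) (p : ℤ × ℤ) : ℤ := p.1 ^ 2 + p.1 * p.2 - m * p.2 ^ 2

lemma Nm_pmul (m : ℤ) (p q : ℤ × ℤ) : Nm m (pmul m p q) = Nm m p * Nm m q := by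
  simp only [Nm, pmul]; ring

end AuxDvdY

open AuxDvdY in
theorem dvd_y_of_small_unit_in_condOrder (d : ℕ) (hd : 2 ≤ d)
    (hsf : Squarefree d) (hd4 : d % 4 = 1) (hdp : Nat.Prime d)
    (ε : ℝ) (hε : IsFundUnit d ε) (x y : ℕ)
    (hxy : ε = x + y * ((1 + Real.sqrt d) / 2))
    (η : ℝ) (hη : IsUnitIn (condOrder d) η) (hη1 : 1 < η) (hηε : η < ε ^ d) :
    d ∣ y := by
  obtain ⟨m, hm⟩ : ∃ m : ℕ, d = 4 * m + 1 := ⟨d / 4, by omega⟩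
  have hd5 : 5 ≤ d := by omega
  set ω : ℝ := (1 + Real.sqrt d) / 2 with hω
  have hdpos : (0:ℝ) ≤ (d:ℝ) := by positivity
  have hsq : Real.sqrt d * Real.sqrt d = d := Real.mul_self_sqrt hdpos
  have hdm : (d : ℝ) = 4 * (m:ℝ) + 1 := by exact_mod_cast congrArg (Nat.cast : ℕ → ℝ) hm
  have hω2 : ω ^ 2 = (m:ℝ) + ω := by
    rw [hω]; linear_combination (1/4 : ℝ) * hsq + (1/4 : ℝ) * hdm
  -- the embedding of pairs
  set F : ℤ × ℤ → ℝ := fun p => (p.1 : ℝ) + (p.2 : ℝ) * ω with hF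
  have hFmul : ∀ p q : ℤ × ℤ, F p * F q = F (pmul (m:ℤ) p q) := by
    intro p q
    simp only [hF, pmul]
    push_cast
    linear_combination ((p.2 : ℝ) * (q.2 : ℝ)) * hω2
  have hirr : Irrational (Real.sqrt d) := hdp.irrational_sqrt
  have hFinj : ∀ p q : ℤ × ℤ, F p = F q → p = q := by
    intro p q hpq
    have h2 : ((p.2 - q.2 : ℤ) : ℝ) * Real.sqrt d = ((2 * (q.1 - p.1) - (p.2 - q.2) : ℤ) : ℝ) := by
      push_cast
      simp only [hF, hω] at hpq
      linarith [hpq]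
    have h22 : p.2 = q.2 := by
      by_contra hne
      have : Irrational (((p.2 - q.2 : ℤ) : ℝ) * Real.sqrt d) :=
        hirr.intCast_mul (by omega : (p.2 - q.2 : ℤ) ≠ 0)
      rw [h2] at this
      exact (Int.not_irrational _) this
    have h11 : p.1 = q.1 := by
      have : ((p.1 : ℝ)) = q.1 := by
        simp only [hF] at hpq
        rw [h22] at hpq
        linarith
      exact_mod_cast this
    exact Prod.ext h11 h22
  -- membership
  have hmemF : ∀ p : ℤ × ℤ, F p ∈ ringOfInts d := fun p => ⟨p.1, p.2, rfl⟩
  have hmem_iff : ∀ α : ℝ, α ∈ ringOfInts d → ∃ p : ℤ × ℤ, α = F p := by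
    rintro α ⟨a, b, hab⟩; exact ⟨(a, b), hab⟩
  -- units closed under multiplication
  have hunit_mul : ∀ α β : ℝ, IsUnitIn (ringOfInts d) α → IsUnitIn (ringOfInts d) β →
      IsUnitIn (ringOfInts d) (α * β) := by
    rintro α β ⟨hα, α', hα', hαα'⟩ ⟨hβ, β', hβ', hββ'⟩
    obtain ⟨p, rfl⟩ := hmem_iff _ hα
    obtain ⟨q, rfl⟩ := hmem_iff _ hβ
    obtain ⟨p', rfl⟩ := hmem_iff _ hα'
    obtain ⟨q', rfl⟩ := hmem_iff _ hβ'
    refine ⟨by rw [hFmul]; exact hmemF _, F p' * F q', by rw [hFmul]; exact hmemF _, ?_⟩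
    calc F p * F q * (F p' * F q') = (F p * F p') * (F q * F q') := by ring
    _ = 1 := by rw [hαα', hββ']; ring
  have hε1 : (1:ℝ) < ε := hε.2.1
  have hεpos : (0:ℝ) < ε := lt_trans one_pos hε1
  -- powers of ε
  have hεpair : ε = F ((x:ℤ), (y:ℤ)) := by simp only [hF]; push_cast; exact hxy
  have hεpow : ∀ k : ℕ, ε ^ k = F (ppow (m:ℤ) ((x:ℤ), (y:ℤ)) k) := by
    intro k
    induction k with
    | zero => simp [ppow, hF]
    | succ n ih => rw [pow_succ, ih, mul_comm, hεpair, hFmul]; rfl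
  have hone_unit : IsUnitIn (ringOfInts d) 1 :=
    ⟨⟨1, 0, by push_cast; ring⟩, 1, ⟨1, 0, by push_cast; ring⟩, by ring⟩
  have hεunit : IsUnitIn (ringOfInts d) ε := hε.1
  have hεpow_unit : ∀ k : ℕ, IsUnitIn (ringOfInts d) (ε ^ k) := by
    intro k
    induction k with
    | zero => simpa using hone_unit
    | succ n ih => rw [pow_succ]; exact hunit_mul _ _ ih hεunit
  -- η is a unit of the ring of integers
  have hcond_sub : ∀ α : ℝ, α ∈ condOrder d → α ∈ ringOfInts d := by
    rintro α ⟨a, b, hab⟩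
    exact ⟨a, b * d, by rw [hab]; push_cast; ring⟩
  have hηK : IsUnitIn (ringOfInts d) η := by
    obtain ⟨h1, β, h2, h3⟩ := hη
    exact ⟨hcond_sub _ h1, β, hcond_sub _ h2, h3⟩
  -- η = ε ^ k for some 1 ≤ k < d
  have hex : ∃ n : ℕ, η < ε ^ n := pow_unbounded_of_one_lt η hε1
  set n₀ := Nat.find hex with hn₀def
  have hn₀ : η < ε ^ n₀ := Nat.find_spec hex
  have hn₀pos : 1 ≤ n₀ := by
    rcases Nat.eq_zero_or_pos n₀ with h | h
    · exfalso; rw [h] at hn₀; simp at hn₀; linarith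
    · exact h
  set k := n₀ - 1 with hkdef
  have hklt : ε ^ k ≤ η := by
    by_contra hcon
    push_neg at hcon
    exact Nat.find_min hex (by omega : k < n₀) hcon
  have hkup : η < ε ^ (k + 1) := by
    have : k + 1 = n₀ := by omega
    rw [this]; exact hn₀
  have hηek : η = ε ^ k := by
    obtain ⟨hmem, β, hβmem, hβ⟩ := hεpow_unit k
    have hekpos : (0:ℝ) < ε ^ k := by positivity
    have hβval : β = (ε ^ k)⁻¹ := by
      field_simp at hβ ⊢
      linarith [hβ]
    have hβpos : 0 < β := by rw [hβval]; positivity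
    have h1le : 1 ≤ η * β := by
      rw [hβval, ← div_eq_mul_inv, le_div_iff₀ hekpos]
      simpa using hklt
    have hlt : η * β < ε := by
      rw [hβval, ← div_eq_mul_inv, div_lt_iff₀ hekpos]
      calc η < ε ^ (k+1) := hkup
      _ = ε * ε ^ k := by ring
    rcases eq_or_lt_of_le h1le with heq | hgt
    · have hβne : β ≠ 0 := ne_of_gt hβpos
      have h1 : η * β = 1 := heq.symm
      have h2 : ε ^ k * β = 1 := hβ
      have : η * β = ε ^ k * β := by rw [h1, h2]
      exact mul_right_cancel₀ hβne this
    · exfalso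
      have hu : IsUnitIn (ringOfInts d) (η * β) := by
        apply hunit_mul _ _ hηK
        exact ⟨hβmem, ε ^ k, hmem, by rw [mul_comm]; exact hβ⟩
      have := hε.2.2 _ hu hgt
      linarith
  have hk1 : 1 ≤ k := by
    rcases Nat.eq_zero_or_pos k with h | h
    · exfalso; rw [h] at hηek; simp at hηek; linarith
    · exact h
  have hkd : k < d := by
    have : ε ^ k < ε ^ d := by rw [← hηek]; exact hηε
    exact (pow_lt_pow_iff_right₀ hε1).mp this
  -- η's pair and divisibility
  obtain ⟨X, Y, hXY⟩ := hη.1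
  have hηF : η = F ((X : ℤ), ((d:ℤ) * Y)) := by
    simp only [hF]; rw [hXY]; push_cast; ring
  have hpair : ppow (m:ℤ) ((x:ℤ), (y:ℤ)) k = ((X:ℤ), (d:ℤ) * Y) := by
    apply hFinj
    rw [← hεpow, ← hηek, hηF]
  have hdvd_vk : (d:ℤ) ∣ (ppow (m:ℤ) ((x:ℤ), (y:ℤ)) k).2 := by
    rw [hpair]; exact ⟨Y, rfl⟩
  -- norm of ε is ±1
  obtain ⟨hεmem, γ, hγmem, hγ⟩ := hεunit
  obtain ⟨q, hq⟩ := hmem_iff _ hγmem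
  have hεγ : F (pmul (m:ℤ) ((x:ℤ),(y:ℤ)) q) = F (1, 0) := by
    rw [← hFmul, ← hεpair, ← hq]
    simp only [hF]
    push_cast
    rw [hγ]; ring
  have hNm1 : Nm (m:ℤ) ((x:ℤ),(y:ℤ)) * Nm (m:ℤ) q = 1 := by
    rw [← Nm_pmul, hFinj _ _ hεγ]
    simp [Nm]
  have hN : Nm (m:ℤ) ((x:ℤ),(y:ℤ)) = 1 ∨ Nm (m:ℤ) ((x:ℤ),(y:ℤ)) = -1 :=
    Int.isUnit_iff.mp (IsUnit.of_mul_eq_one _ hNm1)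
  -- integer congruence induction
  set u : ℤ := 2 * (x:ℤ) + (y:ℤ) with hu
  have hdint : (d:ℤ) = 4 * (m:ℤ) + 1 := by exact_mod_cast hm
  have hkey : ∀ j : ℕ, ∃ a b : ℤ,
      2 ^ j * (2 * (ppow (m:ℤ) ((x:ℤ),(y:ℤ)) j).1 + (ppow (m:ℤ) ((x:ℤ),(y:ℤ)) j).2)
        - 2 * u ^ j = (d:ℤ) * a ∧
      2 ^ j * (ppow (m:ℤ) ((x:ℤ),(y:ℤ)) j).2
        - 2 * (j:ℤ) * u ^ (j - 1) * (y:ℤ) = (d:ℤ) * b := by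
    intro j
    induction j with
    | zero => exact ⟨0, 0, by simp [ppow], by simp [ppow]⟩
    | succ n ih =>
      obtain ⟨a, b, ha, hb⟩ := ih
      set P := ppow (m:ℤ) ((x:ℤ),(y:ℤ)) n with hP
      have hrec1 : (2 : ℤ) * (2 * (ppow (m:ℤ) ((x:ℤ),(y:ℤ)) (n+1)).1
            + (ppow (m:ℤ) ((x:ℤ),(y:ℤ)) (n+1)).2)
          = u * (2 * P.1 + P.2) + (d:ℤ) * (y:ℤ) * P.2 := by
        show (2:ℤ) * (2 * (pmul (m:ℤ) ((x:ℤ),(y:ℤ)) P).1 + (pmul (m:ℤ) ((x:ℤ),(y:ℤ)) P).2) = _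
        simp only [pmul, hu]
        rw [hdint]; ring
      have hrec2 : (2 : ℤ) * (ppow (m:ℤ) ((x:ℤ),(y:ℤ)) (n+1)).2
          = u * P.2 + (y:ℤ) * (2 * P.1 + P.2) := by
        show (2:ℤ) * (pmul (m:ℤ) ((x:ℤ),(y:ℤ)) P).2 = _
        simp only [pmul, hu]; ring
      refine ⟨u * a + 2 ^ n * (y:ℤ) * P.2, u * b + (y:ℤ) * a, ?_, ?_⟩
      · calc 2 ^ (n+1) * (2 * (ppow (m:ℤ) ((x:ℤ),(y:ℤ)) (n+1)).1
            + (ppow (m:ℤ) ((x:ℤ),(y:ℤ)) (n+1)).2) - 2 * u ^ (n+1)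
            = 2 ^ n * ((2:ℤ) * (2 * (ppow (m:ℤ) ((x:ℤ),(y:ℤ)) (n+1)).1
              + (ppow (m:ℤ) ((x:ℤ),(y:ℤ)) (n+1)).2)) - 2 * u ^ (n+1) := by ring
        _ = 2 ^ n * (u * (2 * P.1 + P.2) + (d:ℤ) * (y:ℤ) * P.2) - 2 * u ^ (n+1) := by
              rw [hrec1]
        _ = u * (2 ^ n * (2 * P.1 + P.2) - 2 * u ^ n) + (d:ℤ) * (2 ^ n * (y:ℤ) * P.2) := by
              ring
        _ = (d:ℤ) * (u * a + 2 ^ n * (y:ℤ) * P.2) := by rw [ha]; ring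
      · rcases Nat.eq_zero_or_pos n with hn0 | hnpos
        · subst hn0
          have e1 : P.1 = 1 := by simp [hP, ppow]
          have e2 : P.2 = 0 := by simp [hP, ppow]
          rw [e1, e2] at ha
          rw [e2] at hb
          have hda : (d:ℤ) * a = 0 := by linear_combination -ha
          have hdb : (d:ℤ) * b = 0 := by push_cast at hb; linear_combination -hb
          have hP1 : (ppow (m:ℤ) ((x:ℤ),(y:ℤ)) (0+1)).2 = (y:ℤ) := by
            simp [ppow, pmul]
          rw [hP1]
          push_cast
          linear_combination (-u) * hdb + (-(y:ℤ)) * hda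
        · obtain ⟨c, rfl⟩ : ∃ c, n = c + 1 := ⟨n - 1, by omega⟩
          have he1 : (c + 1 : ℕ) - 1 = c := by omega
          have he2 : (c + 1 + 1 : ℕ) - 1 = c + 1 := by omega
          rw [he2]
          rw [he1] at hb
          push_cast at hb ha ⊢
          linear_combination (2 ^ (c+1) : ℤ) * hrec2 + u * hb + (y:ℤ) * ha
  -- conclude
  obtain ⟨a, b, ha, hb⟩ := hkey k
  have hdvd2 : (d:ℤ) ∣ 2 * (k:ℤ) * u ^ (k - 1) * (y:ℤ) := by
    obtain ⟨Z, hZ⟩ := hdvd_vk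
    exact ⟨2 ^ k * Z - b, by linear_combination (2 ^ k : ℤ) * hZ - hb⟩
  have hprime : Prime (d:ℤ) := Nat.prime_iff_prime_int.mp hdp
  have hdy : (d:ℤ) ∣ (y:ℤ) := by
    rcases (hprime.dvd_mul.mp hdvd2) with h | h
    · rcases (hprime.dvd_mul.mp h) with h' | h'
      · rcases (hprime.dvd_mul.mp h') with h'' | h''
        · exfalso
          have := Int.le_of_dvd (by norm_num) h''
          omega
        · exfalso
          have : (d:ℤ) ∣ (k:ℤ) := h''
          have : d ∣ k := by exact_mod_cast this
          have := Nat.le_of_dvd (by omega) this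
          omega
      · exfalso
        have hdu : (d:ℤ) ∣ u := hprime.dvd_of_dvd_pow h'
        have hmain : u ^ 2 - (d:ℤ) * (y:ℤ)^2 = 4 * Nm (m:ℤ) ((x:ℤ),(y:ℤ)) := by
          simp only [Nm, hu]; rw [hdint]; ring
        have hd4' : (d:ℤ) ∣ 4 * Nm (m:ℤ) ((x:ℤ),(y:ℤ)) := by
          rw [← hmain]
          exact dvd_sub (dvd_pow hdu (by norm_num)) ⟨(y:ℤ)^2, rfl⟩
        rcases hN with hN1 | hN1 <;> rw [hN1] at hd4'
        · have := Int.le_of_dvd (by norm_num) hd4'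
          omega
        · have h4 : (d:ℤ) ∣ 4 := by
            have := hd4'
            rw [show (4:ℤ) * -1 = -4 by ring] at this
            exact dvd_neg.mp this
          have := Int.le_of_dvd (by norm_num) h4
          omega
    · exact h
  exact_mod_cast hdy
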